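/- Let X and H be nonempty closed convex subsets of ℝ^n with X ∩ H ≠ ∅, and let x ∈ X. If P_X(P_H(x)) = x, then x ∈ H. -/
import Mathlib


open RealInnerProductSpace

/-- `P` is the metric (orthogonal) projection onto `X`. -/
def IsProjection {n : ℕ} (X : Set (EuclideanSpace ℝ (Fin n)))
    (P : EuclideanSpace ℝ (Fin n) → EuclideanSpace ℝ (Fin n)) : Prop :=
  ∀ x, P x ∈ X ∧ ∀ z ∈ X, ‖P x - x‖ ≤ ‖z - x‖

lemma proj_inner_le {n : ℕ} {K : Set (EuclideanSpace ℝ (Fin n))} (hK : Convex ℝ K)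
    {u v : EuclideanSpace ℝ (Fin n)} (hv : v ∈ K)
    (hmin : ∀ z ∈ K, ‖v - u‖ ≤ ‖z - u‖) :
    ∀ z ∈ K, ⟪u - v, z - v⟫ ≤ 0 := by
  rw [← norm_eq_iInf_iff_real_inner_le_zero hK hv]
  haveI : Nonempty K := ⟨⟨v, hv⟩⟩
  apply le_antisymm
  · apply le_ciInf
    intro w
    rw [norm_sub_rev u v, norm_sub_rev u w]
    exact hmin w w.2
  · exact ciInf_le ⟨0, fun a ⟨w, hw⟩ => hw ▸ norm_nonneg _⟩ (⟨v, hv⟩ : K)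

/-- If `X ∩ H ≠ ∅`, `x ∈ X` and `P_X(P_H(x)) = x`, then `x ∈ H`. -/
theorem fixedPoint_of_double_projection_mem {n : ℕ}
    (X H : Set (EuclideanSpace ℝ (Fin n)))
    (hXcl : IsClosed X) (hXconv : Convex ℝ X) (hXne : X.Nonempty)
    (hHcl : IsClosed H) (hHconv : Convex ℝ H) (hHne : H.Nonempty)
    (hXH : (X ∩ H).Nonempty)
    (PX PH : EuclideanSpace ℝ (Fin n) → EuclideanSpace ℝ (Fin n))
    (hPX : IsProjection X PX) (hPH : IsProjection H PH)
    (x : EuclideanSpace ℝ (Fin n)) (hx : x ∈ X) (hfix : PX (PH x) = x) :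
    x ∈ H := by
  set y := PH x with hy
  have hyH : y ∈ H := (hPH x).1
  have hminX : ∀ z ∈ X, ‖x - y‖ ≤ ‖z - y‖ := by
    intro z hz
    have := (hPX y).2 z hz
    rwa [hfix] at this
  have hminH : ∀ z ∈ H, ‖y - x‖ ≤ ‖z - x‖ := (hPH x).2
  have h1 : ∀ z ∈ X, ⟪y - x, z - x⟫ ≤ 0 := proj_inner_le hXconv hx hminX
  have h2 : ∀ z ∈ H, ⟪x - y, z - y⟫ ≤ 0 := proj_inner_le hHconv hyH hminH
  obtain ⟨z, hzX, hzH⟩ := hXH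
  have key : ‖y - x‖ ^ 2 ≤ 0 := by
    have e1 := h1 z hzX
    have e2 := h2 z hzH
    have : ⟪y - x, z - x⟫ + ⟪x - y, z - y⟫ = ‖y - x‖ ^ 2 := by
      rw [show x - y = -(y - x) by abel_nf, inner_neg_left, ← sub_eq_add_neg,
        ← inner_sub_right, show z - x - (z - y) = y - x by abel,
        real_inner_self_eq_norm_sq]
    linarith
  have : y = x := by
    have h0 : ‖y - x‖ = 0 := by nlinarith [norm_nonneg (y - x)]
    have := norm_sub_eq_zero_iff.mp h0
    exact this
  rwa [← this]
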